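/- For real x with |x| < 1, x ≠ 0, ∫₀^π θ sin θ · ((1 + x cos θ)^{1/3} + (1 − x cos θ)^{1/3}) dθ = (3π/(4x)) · ((1+x)^{4/3} − (1−x)^{4/3}). -/

import Mathlib

open Real intervalIntegral

theorem stmt_15 (x : ℝ) (hx : |x| < 1) (hx0 : x ≠ 0) :
    ∫ θ in (0:ℝ)..Real.pi,
        θ * Real.sin θ *
          ((1 + x * Real.cos θ) ^ ((1 : ℝ) / 3) + (1 - x * Real.cos θ) ^ ((1 : ℝ) / 3))
      = 3 * Real.pi / (4 * x) *
        ((1 + x) ^ ((4 : ℝ) / 3) - (1 - x) ^ ((4 : ℝ) / 3)) := by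
  have habs : ∀ θ : ℝ, |x * Real.cos θ| < 1 := by
    intro θ
    calc |x * Real.cos θ| = |x| * |Real.cos θ| := abs_mul _ _
      _ ≤ |x| * 1 := by gcongr; exact Real.abs_cos_le_one θ
      _ = |x| := mul_one _
      _ < 1 := hx
  have hpos1 : ∀ θ : ℝ, 0 < 1 + x * Real.cos θ := fun θ => by
    have := abs_lt.1 (habs θ); linarith [this.1]
  have hpos2 : ∀ θ : ℝ, 0 < 1 - x * Real.cos θ := fun θ => by
    have := abs_lt.1 (habs θ); linarith [this.2]
  set g : ℝ → ℝ := fun θ =>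
    (1 + x * Real.cos θ) ^ ((1 : ℝ) / 3) + (1 - x * Real.cos θ) ^ ((1 : ℝ) / 3) with hgdef
  have hcg : Continuous g := by
    apply Continuous.add
    · exact (Continuous.rpow_const (by continuity) fun θ => Or.inr (by norm_num))
    · exact (Continuous.rpow_const (by continuity) fun θ => Or.inr (by norm_num))
  have hsym : ∀ θ : ℝ, g (Real.pi - θ) = g θ := by
    intro θ
    simp only [hgdef, Real.cos_pi_sub]
    rw [show 1 + x * -Real.cos θ = 1 - x * Real.cos θ by ring,
        show 1 - x * -Real.cos θ = 1 + x * Real.cos θ by ring, add_comm]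
  -- symmetry step
  have key : (∫ θ in (0:ℝ)..Real.pi, θ * Real.sin θ * g θ)
      = ∫ θ in (0:ℝ)..Real.pi, (Real.pi - θ) * Real.sin θ * g θ := by
    have h := intervalIntegral.integral_comp_sub_left
      (a := (0:ℝ)) (b := Real.pi) (fun θ => θ * Real.sin θ * g θ) Real.pi
    rw [sub_self, sub_zero] at h
    rw [← h]
    apply intervalIntegral.integral_congr
    intro θ _
    simp only [Real.sin_pi_sub, hsym]
  -- value of J
  have hJ : (∫ θ in (0:ℝ)..Real.pi, Real.sin θ * g θ)
      = 3 / (2 * x) * ((1 + x) ^ ((4:ℝ)/3) - (1 - x) ^ ((4:ℝ)/3)) := by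
    have hderiv : ∀ t ∈ Set.uIcc (0:ℝ) Real.pi,
        HasDerivAt (fun t => 3 / (4 * x) *
          ((1 - x * Real.cos t) ^ ((4:ℝ)/3) - (1 + x * Real.cos t) ^ ((4:ℝ)/3)))
          (Real.sin t * g t) t := by
      intro t _
      have h1 : HasDerivAt (fun t : ℝ => 1 + x * Real.cos t) (x * -Real.sin t) t :=
        ((Real.hasDerivAt_cos t).const_mul x).const_add 1
      have h2 : HasDerivAt (fun t : ℝ => 1 - x * Real.cos t) (-(x * -Real.sin t)) t :=
        ((Real.hasDerivAt_cos t).const_mul x).const_sub 1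
      have h1' := h1.rpow_const (p := (4:ℝ)/3) (Or.inl (ne_of_gt (hpos1 t)))
      have h2' := h2.rpow_const (p := (4:ℝ)/3) (Or.inl (ne_of_gt (hpos2 t)))
      have h3 := ((h2'.sub h1').const_mul (3 / (4 * x)))
      refine h3.congr_deriv ?_
      rw [show (4:ℝ)/3 - 1 = 1/3 by norm_num]
      simp only [hgdef]
      field_simp
      ring
    rw [intervalIntegral.integral_eq_sub_of_hasDerivAt hderiv
      ((Real.continuous_sin.mul hcg).intervalIntegrable 0 Real.pi)]
    simp only [Real.cos_pi, Real.cos_zero]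
    rw [show 1 - x * (-1) = 1 + x by ring, show 1 + x * (-1) = 1 - x by ring,
        show x * 1 = x by ring]
    field_simp
    ring
  -- linearity
  have hint1 : IntervalIntegrable (fun θ => θ * Real.sin θ * g θ) MeasureTheory.volume 0 Real.pi :=
    ((continuous_id.mul Real.continuous_sin).mul hcg).intervalIntegrable 0 Real.pi
  have hint2 : IntervalIntegrable (fun θ => Real.pi * (Real.sin θ * g θ)) MeasureTheory.volume 0 Real.pi :=
    (continuous_const.mul (Real.continuous_sin.mul hcg)).intervalIntegrable 0 Real.pi
  have hsplit : (∫ θ in (0:ℝ)..Real.pi, (Real.pi - θ) * Real.sin θ * g θ)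
      = Real.pi * (∫ θ in (0:ℝ)..Real.pi, Real.sin θ * g θ)
        - ∫ θ in (0:ℝ)..Real.pi, θ * Real.sin θ * g θ := by
    rw [← intervalIntegral.integral_const_mul, ← intervalIntegral.integral_sub hint2 hint1]
    apply intervalIntegral.integral_congr
    intro θ _
    ring
  have h2I : (∫ θ in (0:ℝ)..Real.pi, θ * Real.sin θ * g θ)
      = Real.pi * (∫ θ in (0:ℝ)..Real.pi, Real.sin θ * g θ) / 2 := by
    have := key.trans hsplit
    linarith
  rw [h2I, hJ]
  field_simp
  ring
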